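/- arXiv:0711.3403 — 2 statements merged into one kernel-verified Lean document; each statement's English description precedes it below -/
import Mathlib

section
/- Let k ≥ 1 be an integer and let f : ℝ³ → ℝ³ be a Schwartz function. Then ∫_{ℝ³} ⟨D^k((y·∇)f)(y), D^k f(y)⟩ dy = (k − 3/2)·‖D^k f‖_{L²(ℝ³)}², where D^k g denotes the k-th iterated (total) derivative of g (a tensor-valued function), ⟨·,·⟩ the pointwise inner product of such tensors, ‖D^k f‖_{L²}² = ∫_{ℝ³} |D^k f(y)|² dy, and (y·∇)f(y) = Σ_{j=1}^{3} y_j ∂_j f(y). -/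
open MeasureTheory Set RealInnerProductSpace

noncomputable section

abbrev E3 := EuclideanSpace ℝ (Fin 3)

namespace SchwartzMap
open LineDeriv

def pderivCLM (𝕜 : Type) [RCLike 𝕜] (m : E3) : 𝓢(E3, E3) →L[ℝ] 𝓢(E3, E3) :=
  lineDerivOpCLM ℝ 𝓢(E3, E3) m

theorem pderivCLM_apply (𝕜 : Type) [RCLike 𝕜] (m : E3) (f : 𝓢(E3, E3)) (x : E3) :
    pderivCLM 𝕜 m f x = fderiv ℝ f x m := rfl

def iteratedPDeriv (𝕜 : Type) [RCLike 𝕜] {n : ℕ} (m : Fin n → E3) (f : 𝓢(E3, E3)) :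
    𝓢(E3, E3) := ∂^{m} f

theorem iteratedPDeriv_zero (𝕜 : Type) [RCLike 𝕜] (m : Fin 0 → E3) (f : 𝓢(E3, E3)) :
    iteratedPDeriv 𝕜 m f = f := rfl

theorem iteratedPDeriv_succ_left (𝕜 : Type) [RCLike 𝕜] {n : ℕ} (m : Fin (n + 1) → E3)
    (f : 𝓢(E3, E3)) :
    iteratedPDeriv 𝕜 m f = pderivCLM 𝕜 (m 0) (iteratedPDeriv 𝕜 (Fin.tail m) f) := rfl

theorem iteratedPDeriv_eq_iteratedFDeriv {𝕜 : Type} [RCLike 𝕜] {n : ℕ} {m : Fin n → E3}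
    {f : 𝓢(E3, E3)} {x : E3} : iteratedPDeriv 𝕜 m f x = iteratedFDeriv ℝ n f x m :=
  iteratedLineDerivOp_eq_iteratedFDeriv

end SchwartzMap

section Aux

open SchwartzMap

noncomputable def innerB : E3 →L[ℝ] E3 →L[ℝ] ℝ := innerSL ℝ
@[simp] lemma innerB_apply (a b : E3) : innerB a b = ⟪a, b⟫ := rfl

lemma schwartz_bound (u : 𝓢(E3,E3)) : ∃ C, 0 ≤ C ∧ ∀ y, ‖u y‖ ≤ C := by
  obtain ⟨C, hC⟩ := u.decay' 0 0
  have h : ∀ y, ‖u y‖ ≤ C := fun y => by have := hC y; rwa [pow_zero, one_mul, norm_iteratedFDeriv_zero] at this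
  exact ⟨C, le_trans (norm_nonneg (u 0)) (h 0), h⟩

lemma coord_le_norm (y : E3) (j : Fin 3) : |y j| ≤ ‖y‖ := by
  have h := abs_real_inner_le_norm (EuclideanSpace.single j (1:ℝ)) y
  rw [EuclideanSpace.inner_single_left] at h
  simpa [EuclideanSpace.norm_single] using h

lemma integrable_inner' (p q : 𝓢(E3,E3)) :
    Integrable (fun y => ⟪p y, q y⟫) (volume : Measure E3) := by
  obtain ⟨C, hC0, hC⟩ := schwartz_bound q
  refine ((p.integrable_pow_mul volume 0).const_mul C).mono
    (Continuous.aestronglyMeasurable (p.continuous.inner q.continuous)) ?_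
  filter_upwards with y
  simp only [pow_zero, one_mul, Real.norm_eq_abs]
  calc |⟪p y, q y⟫| ≤ ‖p y‖ * ‖q y‖ := abs_real_inner_le_norm _ _
    _ ≤ ‖p y‖ * C := by gcongr; exact hC y
    _ = C * ‖p y‖ := mul_comm _ _
    _ ≤ |C * ‖p y‖| := le_abs_self _

lemma integrable_coord_inner (j : Fin 3) (p q : 𝓢(E3,E3)) :
    Integrable (fun y : E3 => (y j) * ⟪p y, q y⟫) (volume : Measure E3) := by
  obtain ⟨C, hC0, hC⟩ := schwartz_bound q
  have hmeas : Continuous (fun y : E3 => (y j) * ⟪p y, q y⟫) :=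
    ((EuclideanSpace.proj (𝕜 := ℝ) j).continuous).mul (p.continuous.inner q.continuous)
  refine ((p.integrable_pow_mul volume 1).const_mul C).mono hmeas.aestronglyMeasurable ?_
  filter_upwards with y
  have : |y j * ⟪p y, q y⟫| ≤ C * (‖y‖ ^ 1 * ‖p y‖) := by
    rw [abs_mul, pow_one]
    calc |y j| * |⟪p y, q y⟫| ≤ ‖y‖ * (‖p y‖ * ‖q y‖) :=
        mul_le_mul (coord_le_norm y j) (abs_real_inner_le_norm _ _) (abs_nonneg _) (norm_nonneg _)
      _ ≤ ‖y‖ * (‖p y‖ * C) := by gcongr; exact hC y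
      _ = C * (‖y‖ * ‖p y‖) := by ring
  simpa only [Real.norm_eq_abs] using this.trans (le_abs_self _)

lemma fderiv_coord_smul (u : 𝓢(E3,E3)) (j : Fin 3) (y : E3) :
    fderiv ℝ (fun z : E3 => (z j) • u z) y (EuclideanSpace.single j 1) =
      u y + (y j) • fderiv ℝ u y (EuclideanSpace.single j 1) := by
  have hc : HasFDerivAt (fun z : E3 => z j) (EuclideanSpace.proj (𝕜 := ℝ) j) y := by
    simpa using (EuclideanSpace.proj (𝕜 := ℝ) j).hasFDerivAt
  have hu : HasFDerivAt (fun z => u z) (fderiv ℝ u y) y := u.differentiableAt.hasFDerivAt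
  have := (hc.smul hu).fderiv
  rw [show (fun z : E3 => (z j) • u z) = ((fun z : E3 => z j) • fun z => u z) from rfl, this]
  simp [ContinuousLinearMap.smulRight_apply, EuclideanSpace.single_apply]
  abel

lemma key_j (u : 𝓢(E3,E3)) (j : Fin 3) :
    ∫ y : E3, (y j) * ⟪fderiv ℝ u y (EuclideanSpace.single j 1), u y⟫ =
      -(1/2) * ∫ y : E3, ⟪u y, u y⟫ := by
  set v := EuclideanSpace.single j (1:ℝ)
  set du := pderivCLM ℝ v u with hdu
  have hdu_apply : ∀ y, du y = fderiv ℝ u y v := fun y => pderivCLM_apply ℝ v u y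
  have hcd : Differentiable ℝ (fun z : E3 => z j) := (EuclideanSpace.proj (𝕜 := ℝ) j).differentiable
  have hfdiff : Differentiable ℝ (fun z : E3 => (z j) • u z) := hcd.smul u.differentiable
  have hI1 : Integrable (fun y : E3 => (y j) * ⟪u y, du y⟫) volume := integrable_coord_inner j u du
  have hI2 : Integrable (fun y : E3 => (y j) * ⟪du y, u y⟫) volume := integrable_coord_inner j du u
  have hI3 : Integrable (fun y : E3 => ⟪u y, u y⟫) volume := integrable_inner' u u
  have hI4 : Integrable (fun y : E3 => (y j) * ⟪u y, u y⟫) volume := integrable_coord_inner j u u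
  have ibp := integral_bilinear_fderiv_right_eq_neg_left_of_integrable (μ := (volume : Measure E3))
    (B := innerB) (f := fun z : E3 => (z j) • u z) (g := (u : E3 → E3))
    (v := v) ?_ ?_ ?_ (fun x _ => hfdiff x) (fun x _ => u.differentiable x)
  · have e1 : ∫ y : E3, ⟪(y j) • u y, fderiv ℝ u y v⟫ = ∫ y : E3, (y j) * ⟪du y, u y⟫ := by
      congr 1; funext y
      rw [real_inner_smul_left, hdu_apply, real_inner_comm]
    have e2 : ∫ y : E3, ⟪fderiv ℝ (fun z : E3 => (z j) • u z) y v, u y⟫ =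
        (∫ y : E3, ⟪u y, u y⟫) + ∫ y : E3, (y j) * ⟪du y, u y⟫ := by
      rw [← integral_add hI3 hI2]
      congr 1; funext y
      rw [fderiv_coord_smul, inner_add_left, real_inner_smul_left, hdu_apply]
    simp only [innerB_apply] at ibp
    rw [e1, e2] at ibp
    have goal_eq : ∫ y : E3, (y j) * ⟪fderiv ℝ u y v, u y⟫ =
        ∫ y : E3, (y j) * ⟪du y, u y⟫ := by
      congr 1
    rw [goal_eq]
    linarith [ibp]
  · apply (hI3.add hI2).congr
    filter_upwards with y
    simp only [Pi.add_apply, innerB_apply]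
    rw [fderiv_coord_smul, inner_add_left, real_inner_smul_left, ← hdu_apply]
  · apply hI1.congr
    filter_upwards with y
    simp only [innerB_apply]
    rw [real_inner_smul_left, ← hdu_apply]
  · apply hI4.congr
    filter_upwards with y
    simp only [innerB_apply]
    rw [real_inner_smul_left]

lemma euclidean_decomp (y : E3) : ∑ j : Fin 3, (y j) • EuclideanSpace.single j (1:ℝ) = y := by
  ext i
  rw [WithLp.ofLp_sum, Finset.sum_apply]
  simp [EuclideanSpace.single_apply, PiLp.smul_apply, Finset.sum_ite_eq', mul_comm]

lemma key_div (u : 𝓢(E3,E3)) :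
    ∫ y : E3, ⟪fderiv ℝ u y y, u y⟫ = -(3/2) * ∫ y : E3, ⟪u y, u y⟫ := by
  have hpt : ∀ y : E3, ⟪fderiv ℝ u y y, u y⟫ =
      ∑ j : Fin 3, (y j) * ⟪fderiv ℝ u y (EuclideanSpace.single j 1), u y⟫ := by
    intro y
    have h1 : fderiv ℝ u y (∑ j : Fin 3, (y j) • EuclideanSpace.single j (1:ℝ)) =
        ∑ j : Fin 3, (y j) • fderiv ℝ u y (EuclideanSpace.single j 1) := by
      rw [map_sum]
      exact Finset.sum_congr rfl (fun j _ => ContinuousLinearMap.map_smul _ _ _)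
    rw [euclidean_decomp] at h1
    rw [h1, sum_inner]
    exact Finset.sum_congr rfl (fun j _ => real_inner_smul_left _ _ _)
  have hint : ∀ j : Fin 3, Integrable
      (fun y : E3 => (y j) * ⟪fderiv ℝ u y (EuclideanSpace.single j 1), u y⟫) volume := by
    intro j
    apply (integrable_coord_inner j (pderivCLM ℝ (EuclideanSpace.single j 1) u) u).congr
    filter_upwards with y
    rw [pderivCLM_apply]
  calc ∫ y : E3, ⟪fderiv ℝ u y y, u y⟫
      = ∫ y : E3, ∑ j : Fin 3, (y j) * ⟪fderiv ℝ u y (EuclideanSpace.single j 1), u y⟫ := by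
        congr 1; funext y; exact hpt y
    _ = ∑ j : Fin 3, ∫ y : E3, (y j) * ⟪fderiv ℝ u y (EuclideanSpace.single j 1), u y⟫ :=
        integral_finset_sum _ (fun j _ => hint j)
    _ = ∑ _j : Fin 3, -(1/2) * ∫ y : E3, ⟪u y, u y⟫ := by
        congr 1; funext j; exact key_j u j
    _ = -(3/2) * ∫ y : E3, ⟪u y, u y⟫ := by
        simp [Finset.sum_const]
        ring

def Lam (h : 𝓢(E3, E3)) : 𝓢(E3, E3) :=
  SchwartzMap.bilinLeftCLM (ContinuousLinearMap.id ℝ (E3 →L[ℝ] E3))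
    ((ContinuousLinearMap.id ℝ E3).hasTemperateGrowth) (SchwartzMap.fderivCLM ℝ E3 E3 h)

lemma Lam_apply (h : 𝓢(E3,E3)) (x : E3) : Lam h x = fderiv ℝ h x x := rfl

lemma pderiv_Lam (w : E3) (h : 𝓢(E3,E3)) :
    pderivCLM ℝ w (Lam h) = Lam (pderivCLM ℝ w h) + pderivCLM ℝ w h := by
  ext y
  have hdiff : ∀ x, DifferentiableAt ℝ (fderiv ℝ h) x := fun x =>
    (((h.smooth ⊤).fderiv_right (m := (⊤:ℕ∞)) (by exact_mod_cast le_top)).differentiable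
      (by simp)).differentiableAt
  have h1 : fderiv ℝ (fun z => fderiv ℝ h z z) y =
      (fderiv ℝ h y).comp (ContinuousLinearMap.id ℝ E3) + (fderiv ℝ (fderiv ℝ h) y).flip y := by
    have := fderiv_clm_apply (c := fderiv ℝ h) (u := fun z => z) (hdiff y) differentiableAt_id
    simpa [fderiv_id'] using this
  have hsymm : ∀ v w : E3, fderiv ℝ (fderiv ℝ h) y v w = fderiv ℝ (fderiv ℝ h) y w v := by
    intro v w
    exact second_derivative_symmetric (f := h) (fun x => (h.differentiableAt).hasFDerivAt)
      ((hdiff y).hasFDerivAt) v w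
  have h2 : fderiv ℝ (fun z => fderiv ℝ h z w) y =
      (fderiv ℝ (fderiv ℝ h) y).flip w := by
    have := fderiv_clm_apply (c := fderiv ℝ h) (u := fun _ => w) (hdiff y)
      (differentiableAt_const w)
    simpa using this
  have lhs : pderivCLM ℝ w (Lam h) y = fderiv ℝ (fun z => fderiv ℝ h z z) y w := by
    rw [pderivCLM_apply]
    congr 1
  rw [SchwartzMap.add_apply, lhs, h1]
  have rhs1 : Lam (pderivCLM ℝ w h) y = fderiv ℝ (fun z => fderiv ℝ h z w) y y := rfl
  rw [rhs1, h2, pderivCLM_apply]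
  simp [hsymm y w, add_comm]

lemma iteratedPDeriv_Lam (k : ℕ) (m : Fin k → E3) (h : 𝓢(E3,E3)) :
    iteratedPDeriv ℝ m (Lam h) = Lam (iteratedPDeriv ℝ m h) + k • iteratedPDeriv ℝ m h := by
  induction k generalizing h with
  | zero => simp [SchwartzMap.iteratedPDeriv_zero]
  | succ n ih =>
    rw [iteratedPDeriv_succ_left, ih (Fin.tail m) h, map_add, map_nsmul, pderiv_Lam,
      ← iteratedPDeriv_succ_left]
    rw [succ_nsmul]
    abel
end Aux

/-- The pointwise (Hilbert–Schmidt/Euclidean) inner product of two `k`-tensor valued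
quantities, i.e. of two `k`-multilinear maps on `ℝ³` with values in `ℝ³`: the sum, over all
`k`-tuples of coordinate directions, of the inner products of the corresponding entries. -/
noncomputable def tInner3 (k : ℕ)
    (A B : ContinuousMultilinearMap ℝ (fun _ : Fin k => E3) E3) : ℝ :=
  ∑ e : Fin k → Fin 3,
    ⟪A (fun i => EuclideanSpace.single (e i) 1), B (fun i => EuclideanSpace.single (e i) 1)⟫

open SchwartzMap in
theorem statement12 (k : ℕ) (hk : 1 ≤ k) (f : SchwartzMap E3 E3) :
    ∫ y : E3,
        tInner3 k (iteratedFDeriv ℝ k (fun z => fderiv ℝ f z z) y) (iteratedFDeriv ℝ k f y) =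
      ((k : ℝ) - 3 / 2) * ∫ y : E3, tInner3 k (iteratedFDeriv ℝ k f y) (iteratedFDeriv ℝ k f y) := by
  clear hk
  set v : (Fin k → Fin 3) → (Fin k → E3) := fun e i => EuclideanSpace.single (e i) 1 with hv
  set u : (Fin k → Fin 3) → 𝓢(E3, E3) := fun e => iteratedPDeriv ℝ (v e) f with hu
  have hg : (fun z : E3 => fderiv ℝ f z z) = ⇑(Lam f) := funext fun x => rfl
  -- pointwise identity for the LHS integrand
  have hLpt : ∀ y : E3,
      tInner3 k (iteratedFDeriv ℝ k (fun z => fderiv ℝ f z z) y) (iteratedFDeriv ℝ k f y) =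
      ∑ e : Fin k → Fin 3, (⟪(Lam (u e)) y, u e y⟫ + (k:ℝ) * ⟪u e y, u e y⟫) := by
    intro y
    rw [hg]
    unfold tInner3
    refine Finset.sum_congr rfl (fun e _ => ?_)
    have h1 : iteratedFDeriv ℝ k (⇑(Lam f)) y (v e) = iteratedPDeriv ℝ (v e) (Lam f) y :=
      (iteratedPDeriv_eq_iteratedFDeriv (𝕜 := ℝ)).symm
    have h2 : iteratedFDeriv ℝ k (⇑f) y (v e) = u e y :=
      (iteratedPDeriv_eq_iteratedFDeriv (𝕜 := ℝ)).symm
    calc ⟪iteratedFDeriv ℝ k (⇑(Lam f)) y (v e), iteratedFDeriv ℝ k (⇑f) y (v e)⟫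
        = ⟪iteratedPDeriv ℝ (v e) (Lam f) y, u e y⟫ := by rw [h1, h2]
      _ = ⟪(Lam (u e)) y + (k • u e) y, u e y⟫ := by
          rw [iteratedPDeriv_Lam, SchwartzMap.add_apply]
      _ = ⟪(Lam (u e)) y, u e y⟫ + (k:ℝ) * ⟪u e y, u e y⟫ := by
          rw [inner_add_left]
          congr 1
          rw [← Nat.cast_smul_eq_nsmul ℝ, SchwartzMap.smul_apply, real_inner_smul_left]
  have hRpt : ∀ y : E3, tInner3 k (iteratedFDeriv ℝ k f y) (iteratedFDeriv ℝ k f y) =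
      ∑ e : Fin k → Fin 3, ⟪u e y, u e y⟫ := by
    intro y
    unfold tInner3
    refine Finset.sum_congr rfl (fun e _ => ?_)
    have h2 : iteratedFDeriv ℝ k (⇑f) y (v e) = u e y :=
      (iteratedPDeriv_eq_iteratedFDeriv (𝕜 := ℝ)).symm
    rw [h2]
  have hIL : ∀ e : Fin k → Fin 3,
      Integrable (fun y : E3 => ⟪(Lam (u e)) y, u e y⟫ + (k:ℝ) * ⟪u e y, u e y⟫) volume :=
    fun e => (integrable_inner' (Lam (u e)) (u e)).add
      (((integrable_inner' (u e) (u e)).const_mul (k:ℝ)))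
  have hkey : ∀ e : Fin k → Fin 3,
      ∫ y : E3, ⟪(Lam (u e)) y, u e y⟫ = -(3/2) * ∫ y : E3, ⟪u e y, u e y⟫ := by
    intro e
    rw [show (fun y : E3 => ⟪(Lam (u e)) y, u e y⟫)
        = fun y : E3 => ⟪fderiv ℝ (u e) y y, u e y⟫ from rfl]
    exact key_div (u e)
  calc ∫ y : E3,
        tInner3 k (iteratedFDeriv ℝ k (fun z => fderiv ℝ f z z) y) (iteratedFDeriv ℝ k f y)
      = ∫ y : E3, ∑ e : Fin k → Fin 3,
          (⟪(Lam (u e)) y, u e y⟫ + (k:ℝ) * ⟪u e y, u e y⟫) := by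
        congr 1; funext y; exact hLpt y
    _ = ∑ e : Fin k → Fin 3,
          ∫ y : E3, (⟪(Lam (u e)) y, u e y⟫ + (k:ℝ) * ⟪u e y, u e y⟫) :=
        integral_finset_sum _ (fun e _ => hIL e)
    _ = ∑ e : Fin k → Fin 3, ((k:ℝ) - 3/2) * ∫ y : E3, ⟪u e y, u e y⟫ := by
        refine Finset.sum_congr rfl (fun e _ => ?_)
        rw [integral_add (integrable_inner' (Lam (u e)) (u e))
          ((integrable_inner' (u e) (u e)).const_mul (k:ℝ)),
          MeasureTheory.integral_const_mul, hkey e]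
        ring
    _ = ((k:ℝ) - 3/2) * ∑ e : Fin k → Fin 3, ∫ y : E3, ⟪u e y, u e y⟫ := by
        rw [Finset.mul_sum]
    _ = ((k : ℝ) - 3 / 2) *
          ∫ y : E3, tInner3 k (iteratedFDeriv ℝ k f y) (iteratedFDeriv ℝ k f y) := by
        congr 1
        rw [← integral_finset_sum _ (fun e _ => integrable_inner' (u e) (u e))]
        congr 1; funext y; exact (hRpt y).symm
end
end

section
/- Let 1 < p < ∞, let k ≥ 1 be an integer, and let θ : ℝ² → ℝ be a Schwartz function. Then ∫_{ℝ²} ⟨D^k((y·∇)θ)(y), D^k θ(y)⟩·|D^k θ(y)|^{p−2} dy = (k − 2/p)·‖D^k θ‖_{L^p(ℝ²)}^{p}, where D^k g denotes the k-th iterated (total) derivative of g (a tensor-valued function), ⟨·,·⟩ and |·| the pointwise inner product and norm of such tensors, ‖D^k θ‖_{L^p}^p = ∫_{ℝ²} |D^k θ(y)|^p dy, and (y·∇)θ(y) = Σ_{j=1}^{2} y_j ∂_j θ(y). -/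
open MeasureTheory Set

noncomputable section

abbrev E2 := EuclideanSpace ℝ (Fin 2)

/-- The pointwise (Hilbert–Schmidt/Euclidean) inner product of two `k`-tensors on `ℝ²`,
i.e. of two `k`-multilinear maps on `ℝ²` with values in `ℝ`: the sum, over all `k`-tuples of
coordinate directions, of the products of the corresponding entries. -/
noncomputable def tInner2 (k : ℕ)
    (A B : ContinuousMultilinearMap ℝ (fun _ : Fin k => E2) ℝ) : ℝ :=
  ∑ e : Fin k → Fin 2,
    A (fun i => EuclideanSpace.single (e i) 1) * B (fun i => EuclideanSpace.single (e i) 1)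

/-- The pointwise (Hilbert–Schmidt/Euclidean) norm of a `k`-tensor on `ℝ²`. -/
noncomputable def tNorm2 (k : ℕ)
    (A : ContinuousMultilinearMap ℝ (fun _ : Fin k => E2) ℝ) : ℝ :=
  Real.sqrt (tInner2 k A A)

namespace St13


lemma sm_dir {f : E2 → ℝ} (hf : ContDiff ℝ (⊤ : ℕ∞) f) (v : E2) :
    ContDiff ℝ (⊤ : ℕ∞) (fun z => fderiv ℝ f z v) := by
  have hd : ContDiff ℝ (⊤ : ℕ∞) (fderiv ℝ f) := hf.fderiv_right (by exact_mod_cast le_top)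
  exact hd.clm_apply contDiff_const

lemma sm_rad {f : E2 → ℝ} (hf : ContDiff ℝ (⊤ : ℕ∞) f) :
    ContDiff ℝ (⊤ : ℕ∞) (fun z => fderiv ℝ f z z) := by
  have hd : ContDiff ℝ (⊤ : ℕ∞) (fderiv ℝ f) := hf.fderiv_right (by exact_mod_cast le_top)
  exact hd.clm_apply contDiff_id

lemma iter_dir {f : E2 → ℝ} (hf : ContDiff ℝ (⊤ : ℕ∞) f) (n : ℕ) (v : E2) (x : E2)
    (m : Fin n → E2) :
    iteratedFDeriv ℝ n (fun z => fderiv ℝ f z v) x m = iteratedFDeriv ℝ n (fderiv ℝ f) x m v := by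
  have hd : ContDiff ℝ (⊤ : ℕ∞) (fderiv ℝ f) := hf.fderiv_right (by exact_mod_cast le_top)
  have h := (ContinuousLinearMap.apply ℝ ℝ v).iteratedFDeriv_comp_left
    (f := fderiv ℝ f) (x := x) hd.contDiffAt (i := n) (by exact_mod_cast le_top)
  have h2 : (fun z => fderiv ℝ f z v) = (ContinuousLinearMap.apply ℝ ℝ v) ∘ (fderiv ℝ f) := rfl
  rw [h2, h]
  rfl

lemma fderiv_rad {f : E2 → ℝ} (hf : ContDiff ℝ (⊤ : ℕ∞) f) (z v : E2) :
    fderiv ℝ (fun w => fderiv ℝ f w w) z v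
      = fderiv ℝ (fun w => fderiv ℝ f w v) z z + fderiv ℝ f z v := by
  have hd : ContDiff ℝ (⊤ : ℕ∞) (fderiv ℝ f) := hf.fderiv_right (by exact_mod_cast le_top)
  have hdz : HasFDerivAt (fderiv ℝ f) (fderiv ℝ (fderiv ℝ f) z) z :=
    hd.differentiable (by simp) |>.differentiableAt.hasFDerivAt
  have h1 : HasFDerivAt (fun w => fderiv ℝ f w w)
      ((fderiv ℝ f z).comp (ContinuousLinearMap.id ℝ E2)
        + (fderiv ℝ (fderiv ℝ f) z).flip z) z :=
    hdz.clm_apply (hasFDerivAt_id z)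
  have h2 : HasFDerivAt (fun w => fderiv ℝ f w v)
      ((fderiv ℝ f z).comp (0 : E2 →L[ℝ] E2) + (fderiv ℝ (fderiv ℝ f) z).flip v) z :=
    hdz.clm_apply (hasFDerivAt_const v z)
  rw [h1.fderiv, h2.fderiv]
  have hsymm : ∀ a b : E2, fderiv ℝ (fderiv ℝ f) z a b = fderiv ℝ (fderiv ℝ f) z b a :=
    second_derivative_symmetric
      (fun y => (hf.differentiable (by simp)).differentiableAt.hasFDerivAt) hdz
  simp only [ContinuousLinearMap.add_apply, ContinuousLinearMap.comp_apply,
    ContinuousLinearMap.coe_id', id_eq, ContinuousLinearMap.flip_apply,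
    ContinuousLinearMap.zero_apply, map_zero, zero_add]
  rw [hsymm v z]
  ring

lemma comm (k : ℕ) : ∀ (f : E2 → ℝ), ContDiff ℝ (⊤ : ℕ∞) f → ∀ (y : E2) (m : Fin k → E2),
    iteratedFDeriv ℝ k (fun z => fderiv ℝ f z z) y m
      = fderiv ℝ (fun z => iteratedFDeriv ℝ k f z m) y y + k * iteratedFDeriv ℝ k f y m := by
  induction k with
  | zero =>
      intro f hf y m
      simp only [iteratedFDeriv_zero_apply, Nat.cast_zero, zero_mul, add_zero]
  | succ k ih =>
      intro f hf y m
      set v := m (Fin.last k) with hv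
      set Gv : E2 → ℝ := fun w => fderiv ℝ f w v with hGv
      have hGv_smooth : ContDiff ℝ (⊤ : ℕ∞) Gv := sm_dir hf v
      have key : ∀ z : E2, iteratedFDeriv ℝ (k + 1) f z m
          = iteratedFDeriv ℝ k Gv z (Fin.init m) := by
        intro z
        rw [iteratedFDeriv_succ_apply_right, ← iter_dir hf k v z (Fin.init m)]
      have lhs1 : iteratedFDeriv ℝ (k + 1) (fun z => fderiv ℝ f z z) y m
          = iteratedFDeriv ℝ k (fun z => fderiv ℝ (fun w => fderiv ℝ f w w) z v) y
              (Fin.init m) := by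
        rw [iteratedFDeriv_succ_apply_right, ← iter_dir (sm_rad hf) k v y (Fin.init m)]
      have lhs2 : (fun z => fderiv ℝ (fun w => fderiv ℝ f w w) z v)
          = fun z => (fun w => fderiv ℝ Gv w w) z + Gv z := by
        funext z
        exact fderiv_rad hf z v
      rw [lhs1, lhs2]
      rw [iteratedFDeriv_add_apply' ((sm_rad hGv_smooth).of_le (by exact_mod_cast le_top :
          ((k:ℕ):WithTop ℕ∞) ≤ ((⊤:ℕ∞):WithTop ℕ∞))).contDiffAt
        (hGv_smooth.of_le (by exact_mod_cast le_top :
          ((k:ℕ):WithTop ℕ∞) ≤ ((⊤:ℕ∞):WithTop ℕ∞))).contDiffAt]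
      rw [ContinuousMultilinearMap.add_apply]
      rw [ih Gv hGv_smooth y (Fin.init m)]
      have key' : (fun z => iteratedFDeriv ℝ k Gv z (Fin.init m))
          = fun z => iteratedFDeriv ℝ (k + 1) f z m := by
        funext z; rw [key z]
      rw [key', ← key y]
      push_cast
      ring



def vec (k : ℕ) (e : Fin k → Fin 2) : Fin k → E2 := fun i => EuclideanSpace.single (e i) 1

lemma norm_vec (k : ℕ) (e : Fin k → Fin 2) (i : Fin k) : ‖vec k e i‖ = 1 := by
  simp [vec, EuclideanSpace.norm_single]

def gg (k : ℕ) (θ : SchwartzMap E2 ℝ) : E2 → EuclideanSpace ℝ (Fin k → Fin 2) :=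
  fun y => WithLp.toLp 2 (fun e => iteratedFDeriv ℝ k (⇑θ) y (vec k e))

lemma gg_smooth (k : ℕ) (θ : SchwartzMap E2 ℝ) : ContDiff ℝ (⊤ : ℕ∞) (gg k θ) := by
  rw [contDiff_euclidean]
  intro e
  have h1 : ContDiff ℝ (⊤ : ℕ∞) (iteratedFDeriv ℝ k (⇑θ)) :=
    (θ.smooth ⊤).iteratedFDeriv_right (by exact_mod_cast le_top)
  exact (ContinuousMultilinearMap.apply ℝ _ ℝ (vec k e)).contDiff.comp h1

lemma gg_hasFDerivAt (k : ℕ) (θ : SchwartzMap E2 ℝ) (y : E2) :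
    HasFDerivAt (gg k θ) (fderiv ℝ (gg k θ) y) y :=
  (((gg_smooth k θ).differentiable (by simp)) y).hasFDerivAt

lemma fderiv_gg_apply (k : ℕ) (θ : SchwartzMap E2 ℝ) (y w : E2) (e : Fin k → Fin 2) :
    fderiv ℝ (gg k θ) y w e = iteratedFDeriv ℝ (k + 1) (⇑θ) y (Fin.cons w (vec k e)) := by
  have hdiff : DifferentiableAt ℝ (gg k θ) y :=
    ((gg_smooth k θ).differentiable (by simp)) y
  have h1 : fderiv ℝ (gg k θ) y w e = fderiv ℝ (fun z => gg k θ z e) y w := by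
    have h2 : (fun z => gg k θ z e) = (EuclideanSpace.proj e) ∘ (gg k θ) := rfl
    rw [h2, ((EuclideanSpace.proj (𝕜 := ℝ) e).hasFDerivAt.comp y hdiff.hasFDerivAt).fderiv]
    rfl
  rw [h1]
  have hit : ContDiff ℝ (⊤ : ℕ∞) (iteratedFDeriv ℝ k (⇑θ)) :=
    (θ.smooth ⊤).iteratedFDeriv_right (by exact_mod_cast le_top)
  have h3 : (fun z => gg k θ z e)
      = (ContinuousMultilinearMap.apply ℝ (fun _ : Fin k => E2) ℝ (vec k e))
        ∘ (iteratedFDeriv ℝ k (⇑θ)) := rfl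
  have h4 : fderiv ℝ (fun z => gg k θ z e) y w
      = fderiv ℝ (iteratedFDeriv ℝ k (⇑θ)) y w (vec k e) := by
    rw [h3, ((ContinuousMultilinearMap.apply ℝ (fun _ : Fin k => E2) ℝ
      (vec k e)).hasFDerivAt.comp y ((hit.differentiable (by simp))
        y).hasFDerivAt).fderiv]
    rfl
  rw [h4, iteratedFDeriv_succ_apply_left]
  simp [Fin.tail_cons]

lemma eunorm_le {ι : Type*} [Fintype ι] (x : EuclideanSpace ℝ ι) (M : ℝ) (hM : 0 ≤ M)
    (h : ∀ e, |x e| ≤ M) : ‖x‖ ≤ Real.sqrt (Fintype.card ι) * M := by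
  rw [EuclideanSpace.norm_eq]
  have h1 : ∑ i, ‖x i‖ ^ 2 ≤ (Fintype.card ι : ℝ) * M ^ 2 := by
    calc ∑ i, ‖x i‖ ^ 2 ≤ ∑ _i : ι, M ^ 2 := by
          apply Finset.sum_le_sum
          intro i _
          have := h i
          rw [Real.norm_eq_abs]
          nlinarith [abs_nonneg (x i)]
      _ = (Fintype.card ι : ℝ) * M ^ 2 := by
          rw [Finset.sum_const]; simp [nsmul_eq_mul]
  calc Real.sqrt (∑ i, ‖x i‖ ^ 2) ≤ Real.sqrt ((Fintype.card ι : ℝ) * M ^ 2) :=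
        Real.sqrt_le_sqrt h1
    _ = Real.sqrt (Fintype.card ι) * M := by
        rw [Real.sqrt_mul (by positivity), Real.sqrt_sq hM]

lemma gg_norm_le (k : ℕ) (θ : SchwartzMap E2 ℝ) (y : E2) :
    ‖gg k θ y‖ ≤ Real.sqrt (Fintype.card (Fin k → Fin 2)) * ‖iteratedFDeriv ℝ k (⇑θ) y‖ := by
  apply eunorm_le _ _ (norm_nonneg _)
  intro e
  have := (iteratedFDeriv ℝ k (⇑θ) y).le_opNorm (vec k e)
  simpa [gg, norm_vec, Real.norm_eq_abs] using this

lemma fderiv_gg_norm_le (k : ℕ) (θ : SchwartzMap E2 ℝ) (y w : E2) :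
    ‖fderiv ℝ (gg k θ) y w‖ ≤ Real.sqrt (Fintype.card (Fin k → Fin 2))
      * (‖iteratedFDeriv ℝ (k + 1) (⇑θ) y‖ * ‖w‖) := by
  apply eunorm_le _ _ (by positivity)
  intro e
  rw [fderiv_gg_apply]
  have := (iteratedFDeriv ℝ (k + 1) (⇑θ) y).le_opNorm (Fin.cons w (vec k e))
  have hprod : (∏ i : Fin (k + 1), ‖(Fin.cons w (vec k e) : Fin (k+1) → E2) i‖) = ‖w‖ := by
    simp [Fin.prod_univ_succ, norm_vec]
  rw [hprod] at this
  simpa [Real.norm_eq_abs] using this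

lemma schwartz_decay1 (f : SchwartzMap E2 ℝ) (m n : ℕ) :
    ∃ C : ℝ, 0 < C ∧ ∀ y : E2, ‖iteratedFDeriv ℝ m (⇑f) y‖ ≤ C * (1 + ‖y‖) ^ (-(n : ℝ)) := by
  obtain ⟨C0, hC0, h0⟩ := f.decay 0 m
  obtain ⟨Cn, hCn, hn⟩ := f.decay n m
  refine ⟨2 ^ n * (C0 + Cn), by positivity, fun y => ?_⟩
  have hb : (0:ℝ) < 1 + ‖y‖ := by positivity
  have key : (1 + ‖y‖) ^ n * ‖iteratedFDeriv ℝ m (⇑f) y‖ ≤ 2 ^ n * (C0 + Cn) := by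
    have hmax : (1 + ‖y‖) ≤ 2 * max 1 ‖y‖ := by
      rcases le_total ‖y‖ 1 with h | h
      · calc 1 + ‖y‖ ≤ 2 := by linarith
          _ ≤ 2 * max 1 ‖y‖ := by nlinarith [le_max_left (1:ℝ) ‖y‖]
      · calc 1 + ‖y‖ ≤ 2 * ‖y‖ := by linarith
          _ ≤ 2 * max 1 ‖y‖ := by nlinarith [le_max_right (1:ℝ) ‖y‖]
    have h2 : (1 + ‖y‖) ^ n ≤ 2 ^ n * (max 1 ‖y‖) ^ n := by
      rw [← mul_pow]
      exact pow_le_pow_left₀ (by positivity) hmax n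
    have h3 : (max 1 ‖y‖) ^ n * ‖iteratedFDeriv ℝ m (⇑f) y‖ ≤ C0 + Cn := by
      rcases le_total ‖y‖ 1 with h | h
      · rw [max_eq_left h, one_pow, one_mul]
        have := h0 y
        simp only [pow_zero, one_mul] at this
        linarith
      · rw [max_eq_right h]
        have := hn y
        linarith
    calc (1 + ‖y‖) ^ n * ‖iteratedFDeriv ℝ m (⇑f) y‖
        ≤ 2 ^ n * (max 1 ‖y‖) ^ n * ‖iteratedFDeriv ℝ m (⇑f) y‖ :=
          mul_le_mul_of_nonneg_right h2 (norm_nonneg _)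
      _ = 2 ^ n * ((max 1 ‖y‖) ^ n * ‖iteratedFDeriv ℝ m (⇑f) y‖) := by ring
      _ ≤ 2 ^ n * (C0 + Cn) := by
          apply mul_le_mul_of_nonneg_left h3 (by positivity)
  rw [Real.rpow_neg hb.le, Real.rpow_natCast]
  have hpos : (0:ℝ) < (1 + ‖y‖) ^ n := by positivity
  have h5 : ‖iteratedFDeriv ℝ m (⇑f) y‖ * (1 + ‖y‖) ^ n ≤ 2 ^ n * (C0 + Cn) := by
    nlinarith [key]
  rw [← le_div_iff₀ hpos] at h5
  rwa [div_eq_mul_inv] at h5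



variable {F : Type*} [NormedAddCommGroup F] [InnerProductSpace ℝ F]

lemma hasFDerivAt_norm_rpow {p : ℝ} (hp : 1 < p) (v : F) :
    HasFDerivAt (fun w : F => ‖w‖ ^ p) ((p * ‖v‖ ^ (p - 2)) • (innerSL ℝ v)) v := by
  by_cases hv : v = 0
  · subst hv
    have hzero : ((p * ‖(0:F)‖ ^ (p - 2)) • (innerSL ℝ (0:F))) = 0 := by
      have : innerSL ℝ (0:F) = 0 := map_zero _
      rw [this, smul_zero]
    rw [hzero]
    rw [hasFDerivAt_iff_isLittleO_nhds_zero]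
    have hsimp : (fun h : F => ‖(0:F) + h‖ ^ p - ‖(0:F)‖ ^ p - (0 : F →L[ℝ] ℝ) h)
        = fun h : F => ‖h‖ ^ p := by
      funext h
      simp [Real.zero_rpow (by positivity : p ≠ 0)]
    rw [hsimp]
    rw [Asymptotics.isLittleO_iff]
    intro c hc
    have ht : Filter.Tendsto (fun h : F => ‖h‖ ^ (p - 1)) (nhds 0) (nhds (0:ℝ)) := by
      have h1 : Filter.Tendsto (fun h : F => ‖h‖) (nhds 0) (nhds (0:ℝ)) := by
        simpa using tendsto_norm_zero
      have h2 := (Real.continuousAt_rpow_const 0 (p - 1)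
        (Or.inr (by linarith))).tendsto
      have := h2.comp h1
      simpa [Function.comp_def, Real.zero_rpow (by linarith : p - 1 ≠ 0)] using this
    filter_upwards [ht.eventually_lt_const hc] with h hlt
    have h0 : (0:ℝ) ≤ ‖h‖ := norm_nonneg _
    have hrw : ‖h‖ ^ p = ‖h‖ ^ (p - 1) * ‖h‖ := by
      rw [show p = (p - 1) + 1 by ring, Real.rpow_add' h0 (by simp; linarith)]
      simp
    rw [Real.norm_eq_abs, abs_of_nonneg (Real.rpow_nonneg h0 p), hrw]
    exact mul_le_mul_of_nonneg_right hlt.le h0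
  · have hnv : (0:ℝ) < ‖v‖ := norm_pos_iff.2 hv
    have h1 : HasFDerivAt (fun w : F => (inner ℝ w w : ℝ))
        ((fderivInnerCLM ℝ ((id v : F), (id v : F))).comp
          ((ContinuousLinearMap.id ℝ F).prod (ContinuousLinearMap.id ℝ F))) v :=
      (hasFDerivAt_id v).inner ℝ (hasFDerivAt_id v)
    have hq : (inner ℝ v v : ℝ) ≠ 0 := by
      rw [real_inner_self_eq_norm_sq]
      positivity
    have h2 := h1.rpow_const (p := p / 2) (Or.inl hq)
    have hfun : (fun w : F => (inner ℝ w w : ℝ) ^ (p / 2)) = fun w : F => ‖w‖ ^ p := by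
      funext w
      rw [real_inner_self_eq_norm_sq, ← Real.rpow_natCast ‖w‖ 2, ← Real.rpow_mul (norm_nonneg w)]
      norm_num
      ring_nf
    rw [hfun] at h2
    apply h2.congr_fderiv
    ext w
    simp only [ContinuousLinearMap.coe_smul', Pi.smul_apply, ContinuousLinearMap.comp_apply,
      ContinuousLinearMap.prod_apply, ContinuousLinearMap.coe_id', id_eq,
      fderivInnerCLM_apply, innerSL_apply_apply, smul_eq_mul]
    have hinner : (inner ℝ v v : ℝ) ^ (p / 2 - 1) = ‖v‖ ^ (p - 2) := by
      rw [real_inner_self_eq_norm_sq, ← Real.rpow_natCast ‖v‖ 2, ← Real.rpow_mul (norm_nonneg v)]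
      norm_num
      ring_nf
    rw [hinner, real_inner_comm w v]
    ring



lemma aux_pow_bound {t : ℝ} (ht : 0 ≤ t) : ((1 + t) ^ 8)⁻¹ * t ≤ ((1 + t) ^ 7)⁻¹ := by
  have h1 : (0:ℝ) < 1 + t := by linarith
  rw [inv_mul_le_iff₀ (by positivity)]
  have h2 : (1 + t) ^ 8 * ((1 + t) ^ 7)⁻¹ = 1 + t := by
    rw [pow_succ]
    field_simp
  rw [h2]
  linarith

lemma integrable_inv_pow {m : ℕ} (hm : 3 ≤ m) :
    Integrable (fun y : E2 => ((1 + ‖y‖) ^ m)⁻¹) := by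
  have h1 : Integrable (fun y : E2 => (1 + ‖y‖) ^ (-(3:ℝ))) := by
    apply integrable_one_add_norm
    rw [finrank_euclideanSpace_fin]
    norm_num
  apply h1.mono'
  · exact (((continuous_const.add continuous_norm).pow m).inv₀
      (fun y => by
        have : (0:ℝ) < 1 + ‖y‖ := by positivity
        exact pow_ne_zero _ this.ne')).aestronglyMeasurable
  · filter_upwards with y
    have hb : (0:ℝ) < 1 + ‖y‖ := by positivity
    rw [Real.norm_eq_abs, abs_of_nonneg (by positivity)]
    rw [Real.rpow_neg hb.le]
    apply inv_anti₀ (by positivity)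
    rw [show ((3:ℝ)) = ((3:ℕ):ℝ) by norm_num, Real.rpow_natCast]
    exact pow_le_pow_right₀ (by linarith [norm_nonneg y]) hm

lemma scaling_ibp (u : E2 → ℝ) (u' : E2 → E2 →L[ℝ] ℝ)
    (hu : ∀ y, HasFDerivAt u (u' y) y) (hcont : Continuous u)
    (CB : ℝ) (hbound : ∀ z w, |u' z w| ≤ CB * ((1 + ‖z‖) ^ 8)⁻¹ * ‖w‖)
    (hint : Integrable u) :
    Integrable (fun y => u' y y) ∧ ∫ y, u' y y = -2 * ∫ y, u y := by
  have hCB0 : 0 ≤ CB := by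
    have h := hbound 0 (EuclideanSpace.single 0 1)
    simp [EuclideanSpace.norm_single] at h
    nlinarith [abs_nonneg ((u' 0) (EuclideanSpace.single 0 1))]
  set Fm : ℝ → E2 → ℝ := fun c y => u (c • y) with hFm
  set F' : ℝ → E2 → ℝ := fun c y => u' (c • y) y with hF'
  have hF'1 : F' 1 = fun y => u' y y := by
    funext y; simp [hF']
  have hF_meas : ∀ᶠ c in nhds (1:ℝ), AEStronglyMeasurable (Fm c) volume := by
    filter_upwards with c
    exact (hcont.comp (continuous_const_smul c)).aestronglyMeasurable
  have hF_int : Integrable (Fm 1) := by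
    simpa [hFm] using hint
  have hF'_meas : AEStronglyMeasurable (F' 1) volume := by
    rw [hF'1]
    have hfd : (fun y => u' y y) = fun y => fderiv ℝ u y y := by
      funext y; rw [(hu y).fderiv]
    rw [hfd]
    have h1 : Measurable (fun y : E2 => (fderiv ℝ u y, y)) :=
      (measurable_fderiv ℝ u).prodMk measurable_id
    exact (((isBoundedBilinearMap_apply (𝕜 := ℝ) (E := E2)
      (F := ℝ)).continuous.measurable).comp h1).aestronglyMeasurable
  have h_bound : ∀ᵐ y : E2 ∂volume, ∀ c ∈ Metric.ball (1:ℝ) 2⁻¹,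
      ‖F' c y‖ ≤ CB * 2 ^ 8 * ((1 + ‖y‖) ^ 7)⁻¹ := by
    filter_upwards with y
    intro c hc
    have hc2 : 2⁻¹ < c := by
      rw [Metric.mem_ball, Real.dist_eq] at hc
      cases' abs_lt.1 hc with h1 h2; linarith
    have hnorm : ‖y‖ ≤ 2 * ‖c • y‖ := by
      rw [norm_smul, Real.norm_eq_abs, abs_of_pos (by linarith)]
      nlinarith [norm_nonneg y]
    have hkey : ((1 + ‖c • y‖) ^ 8)⁻¹ ≤ 2 ^ 8 * ((1 + ‖y‖) ^ 8)⁻¹ := by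
      have hA : (0:ℝ) < 1 + ‖c • y‖ := by positivity
      have hB : (0:ℝ) < 1 + ‖y‖ := by positivity
      have h3 : 1 + ‖y‖ ≤ 2 * (1 + ‖c • y‖) := by linarith [norm_nonneg (c • y)]
      have h4 : (1 + ‖y‖) ^ 8 ≤ 2 ^ 8 * (1 + ‖c • y‖) ^ 8 := by
        calc (1 + ‖y‖) ^ 8 ≤ (2 * (1 + ‖c • y‖)) ^ 8 := pow_le_pow_left₀ hB.le h3 8
          _ = 2 ^ 8 * (1 + ‖c • y‖) ^ 8 := by ring
      have hApos : (0:ℝ) < (1 + ‖c • y‖) ^ 8 := by positivity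
      have h5 : ((1 + ‖c • y‖) ^ 8)⁻¹ * (1 + ‖y‖) ^ 8 ≤ 2 ^ 8 := by
        rw [inv_mul_le_iff₀ hApos]
        linarith [h4]
      calc ((1 + ‖c • y‖) ^ 8)⁻¹
          = ((1 + ‖c • y‖) ^ 8)⁻¹ * (1 + ‖y‖) ^ 8 * ((1 + ‖y‖) ^ 8)⁻¹ := by
            field_simp
        _ ≤ 2 ^ 8 * ((1 + ‖y‖) ^ 8)⁻¹ := mul_le_mul_of_nonneg_right h5 (by positivity)
    calc ‖F' c y‖ = |u' (c • y) y| := rfl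
      _ ≤ CB * ((1 + ‖c • y‖) ^ 8)⁻¹ * ‖y‖ := hbound _ _
      _ ≤ CB * (2 ^ 8 * ((1 + ‖y‖) ^ 8)⁻¹) * ‖y‖ := by
          apply mul_le_mul_of_nonneg_right _ (norm_nonneg y)
          exact mul_le_mul_of_nonneg_left hkey hCB0
      _ = CB * 2 ^ 8 * (((1 + ‖y‖) ^ 8)⁻¹ * ‖y‖) := by ring
      _ ≤ CB * 2 ^ 8 * ((1 + ‖y‖) ^ 7)⁻¹ := by
          apply mul_le_mul_of_nonneg_left (aux_pow_bound (norm_nonneg y)) (by positivity)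
  have bound_int : Integrable (fun y : E2 => CB * 2 ^ 8 * ((1 + ‖y‖) ^ 7)⁻¹) :=
    (integrable_inv_pow (by norm_num)).const_mul _
  have h_diff : ∀ᵐ y : E2 ∂volume, ∀ c ∈ Metric.ball (1:ℝ) 2⁻¹,
      HasDerivAt (fun c => Fm c y) (F' c y) c := by
    filter_upwards with y
    intro c _
    have h1 : HasDerivAt (fun c : ℝ => c • y) y c := by
      simpa using (hasDerivAt_id c).smul_const y
    exact (hu (c • y)).comp_hasDerivAt c h1
  obtain ⟨hint', hderiv⟩ := hasDerivAt_integral_of_dominated_loc_of_deriv_le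
    (Metric.ball_mem_nhds (1:ℝ) (by norm_num : (0:ℝ) < 2⁻¹)) hF_meas hF_int hF'_meas h_bound bound_int h_diff
  rw [hF'1] at hint' hderiv
  refine ⟨hint', ?_⟩
  have hscale : ∀ᶠ c in nhds (1:ℝ), (∫ y, Fm c y) = (c ^ 2)⁻¹ * ∫ y, u y := by
    filter_upwards [Metric.ball_mem_nhds (1:ℝ) (by norm_num : (0:ℝ) < 2⁻¹)] with c hc
    have hc2 : 2⁻¹ < c := by
      rw [Metric.mem_ball, Real.dist_eq] at hc
      cases' abs_lt.1 hc with h1 h2; linarith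
    have := MeasureTheory.Measure.integral_comp_smul (μ := volume) u c
    rw [finrank_euclideanSpace_fin] at this
    rw [hFm]
    rw [this, abs_of_pos (by positivity), smul_eq_mul]
  have hpsi : HasDerivAt (fun c : ℝ => (c ^ 2)⁻¹ * ∫ y, u y) (-2 * ∫ y, u y) 1 := by
    have h1 : HasDerivAt (fun c : ℝ => c ^ 2) 2 1 := by
      simpa using hasDerivAt_pow 2 (1:ℝ)
    have h2 := (h1.inv (by norm_num)).mul_const (∫ y, u y)
    convert h2 using 1
    case e'_9 => norm_num
    all_goals rfl
  have hphi : HasDerivAt (fun c : ℝ => ∫ y, Fm c y) (-2 * ∫ y, u y) 1 :=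
    hpsi.congr_of_eventuallyEq hscale
  exact hderiv.unique hphi


end St13

namespace St13

lemma fderiv_gg_comp (k : ℕ) (θ : SchwartzMap E2 ℝ) (y w : E2) (e : Fin k → Fin 2) :
    fderiv ℝ (fun z => gg k θ z e) y w = fderiv ℝ (gg k θ) y w e := by
  have hdiff : DifferentiableAt ℝ (gg k θ) y :=
    ((gg_smooth k θ).differentiable (by simp)) y
  have h2 : (fun z => gg k θ z e) = (EuclideanSpace.proj e) ∘ (gg k θ) := rfl
  rw [h2, ((EuclideanSpace.proj (𝕜 := ℝ) e).hasFDerivAt.comp y hdiff.hasFDerivAt).fderiv]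
  rfl

lemma gg_decay (k n : ℕ) (θ : SchwartzMap E2 ℝ) :
    ∃ C : ℝ, 0 < C ∧ ∀ z : E2, ‖gg k θ z‖ ≤ C * ((1 + ‖z‖) ^ n)⁻¹ := by
  obtain ⟨C, hC, h⟩ := schwartz_decay1 θ k n
  refine ⟨Real.sqrt (Fintype.card (Fin k → Fin 2)) * C + 1, by positivity, fun z => ?_⟩
  have hb : (0:ℝ) < 1 + ‖z‖ := by positivity
  have h1 := gg_norm_le k θ z
  have h2 := h z
  rw [Real.rpow_neg hb.le, Real.rpow_natCast] at h2
  have hs : (0:ℝ) ≤ Real.sqrt (Fintype.card (Fin k → Fin 2)) := Real.sqrt_nonneg _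
  calc ‖gg k θ z‖ ≤ Real.sqrt (Fintype.card (Fin k → Fin 2)) * ‖iteratedFDeriv ℝ k (⇑θ) z‖ := h1
    _ ≤ Real.sqrt (Fintype.card (Fin k → Fin 2)) * (C * ((1 + ‖z‖) ^ n)⁻¹) :=
        mul_le_mul_of_nonneg_left h2 hs
    _ ≤ (Real.sqrt (Fintype.card (Fin k → Fin 2)) * C + 1) * ((1 + ‖z‖) ^ n)⁻¹ := by
        have : (0:ℝ) ≤ ((1 + ‖z‖) ^ n)⁻¹ := by positivity
        nlinarith

lemma Dgg_decay (k n : ℕ) (θ : SchwartzMap E2 ℝ) :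
    ∃ C : ℝ, 0 < C ∧ ∀ z w : E2, ‖fderiv ℝ (gg k θ) z w‖ ≤ C * ((1 + ‖z‖) ^ n)⁻¹ * ‖w‖ := by
  obtain ⟨C, hC, h⟩ := schwartz_decay1 θ (k + 1) n
  refine ⟨Real.sqrt (Fintype.card (Fin k → Fin 2)) * C + 1, by positivity, fun z w => ?_⟩
  have hb : (0:ℝ) < 1 + ‖z‖ := by positivity
  have h1 := fderiv_gg_norm_le k θ z w
  have h2 := h z
  rw [Real.rpow_neg hb.le, Real.rpow_natCast] at h2
  have hs : (0:ℝ) ≤ Real.sqrt (Fintype.card (Fin k → Fin 2)) := Real.sqrt_nonneg _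
  have hw : (0:ℝ) ≤ ‖w‖ := norm_nonneg w
  have hinv : (0:ℝ) ≤ ((1 + ‖z‖) ^ n)⁻¹ := by positivity
  calc ‖fderiv ℝ (gg k θ) z w‖
      ≤ Real.sqrt (Fintype.card (Fin k → Fin 2)) * (‖iteratedFDeriv ℝ (k + 1) (⇑θ) z‖ * ‖w‖) := h1
    _ ≤ Real.sqrt (Fintype.card (Fin k → Fin 2)) * ((C * ((1 + ‖z‖) ^ n)⁻¹) * ‖w‖) := by
        apply mul_le_mul_of_nonneg_left _ hs
        exact mul_le_mul_of_nonneg_right h2 hw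
    _ ≤ (Real.sqrt (Fintype.card (Fin k → Fin 2)) * C + 1) * ((1 + ‖z‖) ^ n)⁻¹ * ‖w‖ := by
        nlinarith [mul_nonneg hinv hw]

end St13


open St13 in
theorem statement13 (p : ℝ) (hp1 : 1 < p) (k : ℕ) (hk : 1 ≤ k) (θ : SchwartzMap E2 ℝ) :
    ∫ y : E2,
        tInner2 k (iteratedFDeriv ℝ k (fun z => fderiv ℝ θ z z) y) (iteratedFDeriv ℝ k θ y) *
          tNorm2 k (iteratedFDeriv ℝ k θ y) ^ (p - 2) =
      ((k : ℝ) - 2 / p) * ∫ y : E2, tNorm2 k (iteratedFDeriv ℝ k θ y) ^ p := by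
  have hp0 : (0:ℝ) < p := by linarith
  have hp1' : (0:ℝ) < p - 1 := by linarith
  set g : E2 → EuclideanSpace ℝ (Fin k → Fin 2) := gg k θ with hgdef
  set u : E2 → ℝ := fun y => ‖g y‖ ^ p with hudef
  set u' : E2 → E2 →L[ℝ] ℝ := fun y =>
    (p * ‖g y‖ ^ (p - 2)) • ((innerSL ℝ (g y)).comp (fderiv ℝ g y)) with hu'def
  -- derivative of u
  have hu : ∀ y, HasFDerivAt u (u' y) y := by
    intro y
    have h1 := (hasFDerivAt_norm_rpow hp1 (g y)).comp y (gg_hasFDerivAt k θ y)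
    apply h1.congr_fderiv
    rw [ContinuousLinearMap.smul_comp]
  -- norms / inner products
  have tNorm_eq : ∀ y, tNorm2 k (iteratedFDeriv ℝ k (⇑θ) y) = ‖g y‖ := by
    intro y
    rw [tNorm2, tInner2, EuclideanSpace.norm_eq]
    congr 1
    apply Finset.sum_congr rfl
    intro e _
    show g y e * g y e = ‖g y e‖ ^ 2
    rw [Real.norm_eq_abs, sq_abs, pow_two]
  have inner_sum : ∀ a b : EuclideanSpace ℝ (Fin k → Fin 2),
      (inner ℝ a b : ℝ) = ∑ e, a e * b e := by
    intro a b
    rw [PiLp.inner_apply]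
    apply Finset.sum_congr rfl
    intro e _
    simp [RCLike.inner_apply, mul_comm]
  -- pointwise identity for the integrand
  have hpoint : ∀ y : E2,
      tInner2 k (iteratedFDeriv ℝ k (fun z => fderiv ℝ (⇑θ) z z) y) (iteratedFDeriv ℝ k (⇑θ) y) *
          tNorm2 k (iteratedFDeriv ℝ k (⇑θ) y) ^ (p - 2)
        = p⁻¹ * (u' y y) + (k : ℝ) * u y := by
    intro y
    have hcomm : ∀ e : Fin k → Fin 2,
        iteratedFDeriv ℝ k (fun z => fderiv ℝ (⇑θ) z z) y (vec k e)
          = fderiv ℝ g y y e + (k : ℝ) * g y e := by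
      intro e
      have h1 := comm k (⇑θ) (θ.smooth ⊤) y (vec k e)
      rw [h1, ← fderiv_gg_comp k θ y y e]
      rfl
    have hinner2 : tInner2 k (iteratedFDeriv ℝ k (fun z => fderiv ℝ (⇑θ) z z) y)
        (iteratedFDeriv ℝ k (⇑θ) y)
        = (inner ℝ (fderiv ℝ g y y) (g y) : ℝ) + (k : ℝ) * (inner ℝ (g y) (g y) : ℝ) := by
      rw [tInner2, inner_sum, inner_sum, Finset.mul_sum, ← Finset.sum_add_distrib]
      apply Finset.sum_congr rfl
      intro e _
      show iteratedFDeriv ℝ k (fun z => fderiv ℝ (⇑θ) z z) y (vec k e)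
          * (iteratedFDeriv ℝ k (⇑θ) y (vec k e)) = _
      rw [hcomm e]
      have h2 : iteratedFDeriv ℝ k (⇑θ) y (vec k e) = g y e := rfl
      rw [h2]
      ring
    have hu'yy : u' y y = p * ‖g y‖ ^ (p - 2) * (inner ℝ (g y) (fderiv ℝ g y y) : ℝ) := by
      simp [hu'def, mul_assoc]
    have hrpow : ‖g y‖ ^ 2 * ‖g y‖ ^ (p - 2) = ‖g y‖ ^ p := by
      rw [show ‖g y‖ ^ (2:ℕ) = ‖g y‖ ^ ((2:ℕ):ℝ) from (Real.rpow_natCast _ 2).symm,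
        ← Real.rpow_add' (norm_nonneg _) (by norm_num; linarith)]
      norm_num
    have hne : p ≠ 0 := ne_of_gt hp0
    have expand : ((inner ℝ (g y) (fderiv ℝ g y y) : ℝ) + (k:ℝ) * ‖g y‖ ^ 2) * ‖g y‖ ^ (p - 2)
        = p⁻¹ * (p * ‖g y‖ ^ (p - 2) * (inner ℝ (g y) (fderiv ℝ g y y) : ℝ))
          + (k:ℝ) * ‖g y‖ ^ p := by
      rw [← hrpow]
      field_simp
    rw [hinner2, tNorm_eq, hu'yy, real_inner_self_eq_norm_sq]
    first
    | exact expand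
    | (rw [real_inner_comm (g y) (fderiv ℝ g y y)]; exact expand)
    | (rw [real_inner_comm (fderiv ℝ g y y) (g y)]; exact expand)
  -- bound for u'
  set n1 : ℕ := ⌈(4:ℝ) / (p - 1)⌉₊ + 4 with hn1
  have hn1ge : (4:ℝ) ≤ (n1 : ℝ) * (p - 1) := by
    have h1 : (4:ℝ) / (p - 1) ≤ (⌈(4:ℝ) / (p - 1)⌉₊ : ℝ) := Nat.le_ceil _
    have h2 : (4:ℝ) ≤ (⌈(4:ℝ) / (p - 1)⌉₊ : ℝ) * (p - 1) := by
      rw [div_le_iff₀ hp1'] at h1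
      linarith
    have h3 : (⌈(4:ℝ) / (p - 1)⌉₊ : ℝ) * (p - 1) ≤ (n1 : ℝ) * (p - 1) := by
      apply mul_le_mul_of_nonneg_right _ hp1'.le
      rw [hn1]; push_cast; linarith
    linarith
  obtain ⟨Cg, hCg, hgdecay⟩ := gg_decay k n1 θ
  obtain ⟨CD, hCD, hDdecay⟩ := Dgg_decay k 4 θ
  -- ‖g z‖ ^ (p-1) ≤ Cg^(p-1) * ((1+‖z‖)^4)⁻¹
  have hgp : ∀ (q : ℝ), 0 < q → (n1:ℝ) * q ≥ 4 → ∀ z : E2,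
      ‖g z‖ ^ q ≤ Cg ^ q * ((1 + ‖z‖) ^ 4)⁻¹ := by
    intro q hq hq4 z
    have hb : (0:ℝ) < 1 + ‖z‖ := by positivity
    have hb1 : (1:ℝ) ≤ 1 + ‖z‖ := by linarith [norm_nonneg z]
    have h1 : ‖g z‖ ^ q ≤ (Cg * ((1 + ‖z‖) ^ n1)⁻¹) ^ q :=
      Real.rpow_le_rpow (norm_nonneg _) (hgdecay z) hq.le
    have h2 : (Cg * ((1 + ‖z‖) ^ n1)⁻¹) ^ q = Cg ^ q * (((1 + ‖z‖) ^ n1)⁻¹) ^ q :=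
      Real.mul_rpow hCg.le (by positivity)
    have h3 : (((1 + ‖z‖) ^ n1)⁻¹ : ℝ) ^ q = (1 + ‖z‖) ^ (-((n1:ℝ) * q)) := by
      rw [← Real.rpow_natCast (1 + ‖z‖) n1, ← Real.rpow_neg hb.le, ← Real.rpow_mul hb.le]
      ring_nf
    have h4 : (1 + ‖z‖) ^ (-((n1:ℝ) * q)) ≤ (1 + ‖z‖) ^ (-(4:ℝ)) :=
      Real.rpow_le_rpow_of_exponent_le hb1 (by linarith)
    have h5 : ((1 + ‖z‖) : ℝ) ^ (-(4:ℝ)) = ((1 + ‖z‖) ^ (4:ℕ))⁻¹ := by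
      rw [Real.rpow_neg hb.le, show (4:ℝ) = ((4:ℕ):ℝ) by norm_num, Real.rpow_natCast]
    calc ‖g z‖ ^ q ≤ (Cg * ((1 + ‖z‖) ^ n1)⁻¹) ^ q := h1
      _ = Cg ^ q * (((1 + ‖z‖) ^ n1)⁻¹) ^ q := h2
      _ = Cg ^ q * (1 + ‖z‖) ^ (-((n1:ℝ) * q)) := by rw [h3]
      _ ≤ Cg ^ q * ((1 + ‖z‖) ^ (4:ℕ))⁻¹ := by
          rw [← h5]
          exact mul_le_mul_of_nonneg_left h4 (by positivity)
  have hu'bound : ∀ z w : E2, |u' z w| ≤ (p * Cg ^ (p-1) * CD) * ((1 + ‖z‖) ^ 8)⁻¹ * ‖w‖ := by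
    intro z w
    have hb : (0:ℝ) < 1 + ‖z‖ := by positivity
    have h0 : u' z w = p * ‖g z‖ ^ (p - 2) * (inner ℝ (g z) (fderiv ℝ g z w) : ℝ) := by
      simp [hu'def, mul_assoc]
    rw [h0]
    have h1 : |(inner ℝ (g z) (fderiv ℝ g z w) : ℝ)| ≤ ‖g z‖ * ‖fderiv ℝ g z w‖ :=
      abs_real_inner_le_norm _ _
    have h2 : |p * ‖g z‖ ^ (p - 2) * (inner ℝ (g z) (fderiv ℝ g z w) : ℝ)|
        ≤ p * ‖g z‖ ^ (p - 2) * (‖g z‖ * ‖fderiv ℝ g z w‖) := by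
      rw [abs_mul]
      have : |p * ‖g z‖ ^ (p - 2)| = p * ‖g z‖ ^ (p - 2) := by
        rw [abs_of_nonneg]; positivity
      rw [this]
      exact mul_le_mul_of_nonneg_left h1 (by positivity)
    have h3 : ‖g z‖ ^ (p - 1) = ‖g z‖ ^ (p - 2) * ‖g z‖ := by
      rw [show p - 1 = (p - 2) + 1 by ring,
        Real.rpow_add' (norm_nonneg _) (by intro h; linarith), Real.rpow_one]
    have h4 : ‖g z‖ ^ (p-1) ≤ Cg ^ (p-1) * ((1 + ‖z‖) ^ 4)⁻¹ := by
      apply hgp (p-1) hp1'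
      · linarith
      done
    have h5 := hDdecay z w
    calc |p * ‖g z‖ ^ (p - 2) * (inner ℝ (g z) (fderiv ℝ g z w) : ℝ)|
        ≤ p * ‖g z‖ ^ (p - 2) * (‖g z‖ * ‖fderiv ℝ g z w‖) := h2
      _ = p * (‖g z‖ ^ (p - 1) * ‖fderiv ℝ g z w‖) := by rw [h3]; ring
      _ ≤ p * ((Cg ^ (p-1) * ((1 + ‖z‖) ^ 4)⁻¹) * (CD * ((1 + ‖z‖) ^ 4)⁻¹ * ‖w‖)) := by
          apply mul_le_mul_of_nonneg_left _ hp0.le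
          apply mul_le_mul h4 h5 (norm_nonneg _) (by positivity)
      _ = (p * Cg ^ (p-1) * CD) * (((1 + ‖z‖) ^ 4)⁻¹ * ((1 + ‖z‖) ^ 4)⁻¹) * ‖w‖ := by ring
      _ = (p * Cg ^ (p-1) * CD) * ((1 + ‖z‖) ^ 8)⁻¹ * ‖w‖ := by
          rw [← mul_inv, ← pow_add]
  -- continuity and integrability of u
  have hcont : Continuous u := by
    apply Continuous.rpow_const
    · exact (continuous_norm.comp ((gg_smooth k θ).continuous))
    · intro y; right; positivity
  have hintu : Integrable u := by
    have h1 : (n1:ℝ) * p ≥ 4 := by nlinarith [hn1ge]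
    apply ((integrable_inv_pow (by norm_num : 3 ≤ 4)).const_mul (Cg ^ p)).mono'
      hcont.aestronglyMeasurable
    filter_upwards with z
    rw [Real.norm_eq_abs, abs_of_nonneg (by positivity : (0:ℝ) ≤ u z)]
    exact hgp p hp0 h1 z
  -- scaling / integration by parts
  obtain ⟨hint', hibp⟩ := scaling_ibp u u' hu hcont (p * Cg ^ (p-1) * CD) hu'bound hintu
  -- final computation
  calc ∫ y : E2, tInner2 k (iteratedFDeriv ℝ k (fun z => fderiv ℝ (⇑θ) z z) y)
        (iteratedFDeriv ℝ k (⇑θ) y) * tNorm2 k (iteratedFDeriv ℝ k (⇑θ) y) ^ (p - 2)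
      = ∫ y : E2, (p⁻¹ * (u' y y) + (k : ℝ) * u y) := by
        apply integral_congr_ae
        filter_upwards with y
        exact hpoint y
    _ = p⁻¹ * (∫ y, u' y y) + (k : ℝ) * ∫ y, u y := by
        rw [integral_add (hint'.const_mul _) (hintu.const_mul _),
          integral_const_mul, integral_const_mul]
    _ = ((k : ℝ) - 2 / p) * ∫ y, u y := by
        rw [hibp]
        field_simp
        ring
    _ = ((k : ℝ) - 2 / p) * ∫ y : E2, tNorm2 k (iteratedFDeriv ℝ k (⇑θ) y) ^ p := by
        congr 1
        apply integral_congr_ae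
        filter_upwards with y
        rw [tNorm_eq]
end
end
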